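/- Let A be a commutative K-algebra which as an algebra is generated by A (degree 0 part) and finitely many derivations in the sense that 𝔇(A) = ∑ A·d_*⋯d_* where d_* range over finitely many derivations; then the associated graded algebra of 𝔇(A) with respect to the filtration by total degree in the derivations is commutative. Consequently, if A is Noetherian then 𝔇(A) is a (left and right) Noetherian ring. -/

import Mathlib

set_option maxHeartbeats 1000000
set_option synthInstance.maxHeartbeats 400000

open MvPolynomial

noncomputable def Lm (K A : Type*) [Field K] [CommRing A] [Algebra K A] : A →ₗ[K] Module.End K A :=
  (Algebra.lmul K A).toLinearMap

@[simp] lemma Lm_apply {K A : Type*} [Field K] [CommRing A] [Algebra K A] (a x : A) :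
    Lm K A a x = a * x := rfl

lemma Lm_mul {K A : Type*} [Field K] [CommRing A] [Algebra K A] (a b : A) :
    Lm K A (a * b) = Lm K A a * Lm K A b := by
  ext x; simp [Lm, mul_assoc]

lemma Lm_one {K A : Type*} [Field K] [CommRing A] [Algebra K A] :
    Lm K A 1 = 1 := by
  ext x; simp [Lm]

section Aux

variable {K A : Type*} [Field K] [CommRing A] [Algebra K A]
    {s : ℕ} (d : Fin s → Derivation K A A)
    (F : ℕ → Submodule K (Module.End K A))

local notation "E" => Module.End K A

/-- `Flow i` is `F (i-1)` with `Flow 0 = ⊥`. -/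
def FlowF : ℕ → Submodule K (Module.End K A)
  | 0 => ⊥
  | (i+1) => F i

variable (hF0 : F 0 = LinearMap.range (Algebra.lmul K A).toLinearMap)
  (hFsucc : ∀ i : ℕ, F (i + 1) = F i ⊔ Submodule.span K
      {w : Module.End K A | ∃ u ∈ F i, ∃ k : Fin s, w = u * (d k).toLinearMap})
  (hbr : ∀ k l : Fin s,
      (d k).toLinearMap * (d l).toLinearMap - (d l).toLinearMap * (d k).toLinearMap ∈ F 1)

set_option linter.unusedSectionVars false

noncomputable section
include hF0 hFsucc

theorem Fmono : Monotone F := by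
  have h : ∀ i, F i ≤ F (i + 1) := fun i => (hFsucc i) ▸ le_sup_left
  exact monotone_nat_of_le_succ h

theorem hF0' : F 0 = LinearMap.range (Lm K A) := hF0

theorem lmul_mem (a : A) : (Lm K A a) ∈ F 0 := by
  rw [hF0' d F hF0 hFsucc]; exact ⟨a, rfl⟩

theorem dk_lmul (k : Fin s) (a : A) :
    ((d k).toLinearMap) * (Lm K A a) = (Lm K A a) * ((d k).toLinearMap) + Lm K A ((d k) a) := by
  ext x
  simp only [Module.End.mul_apply, LinearMap.add_apply, Lm_apply, Derivation.coeFn_coe]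
  rw [Derivation.leibniz]
  simp only [smul_eq_mul]
  ring

theorem mulA_mem : ∀ i, ∀ u ∈ F i, ∀ a : A, u * (Lm K A a) ∈ F i := by
  intro i
  induction i with
  | zero =>
    intro u hu a
    rw [hF0' d F hF0 hFsucc] at hu
    obtain ⟨b, rfl⟩ := hu
    rw [← Lm_mul]
    exact lmul_mem d F hF0 hFsucc _
  | succ i ih =>
    intro u hu a
    have : F (i+1) ≤ (F (i+1)).comap (LinearMap.mulRight K (Lm K A a)) := by
      rw [hFsucc i]
      apply sup_le
      · intro v hv
        simp only [Submodule.mem_comap, LinearMap.mulRight_apply]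
        exact le_sup_left (α := Submodule K E) <| ih v hv a
      · rw [Submodule.span_le]
        rintro _ ⟨v, hv, k, rfl⟩
        simp only [Set.mem_setOf_eq, SetLike.mem_coe, Submodule.mem_comap,
          LinearMap.mulRight_apply]
        rw [mul_assoc, dk_lmul d F hF0 hFsucc, mul_add, ← mul_assoc]
        rw [← hFsucc i]
        apply add_mem
        · have h1 : v * (Lm K A a) ∈ F i := ih v hv a
          rw [hFsucc i]
          exact le_sup_right (α := Submodule K E) <| Submodule.subset_span ⟨_, h1, k, rfl⟩
        · exact Fmono d F hF0 hFsucc (Nat.le_succ i) (ih v hv _)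
    exact this hu

theorem mul_mem_F : ∀ j i, ∀ u ∈ F i, ∀ v ∈ F j, u * v ∈ F (i + j) := by
  intro j
  induction j with
  | zero =>
    intro i u hu v hv
    rw [hF0' d F hF0 hFsucc] at hv
    obtain ⟨a, rfl⟩ := hv
    exact mulA_mem d F hF0 hFsucc i u hu a
  | succ j ih =>
    intro i u hu
    have : F (j+1) ≤ (F (i+j+1)).comap (LinearMap.mulLeft K u) := by
      rw [hFsucc j]
      apply sup_le
      · intro v hv
        simp only [Submodule.mem_comap, LinearMap.mulLeft_apply]
        exact Fmono d F hF0 hFsucc (Nat.le_succ _) (ih i u hu v hv)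
      · rw [Submodule.span_le]
        rintro _ ⟨v, hv, k, rfl⟩
        simp only [Set.mem_setOf_eq, SetLike.mem_coe, Submodule.mem_comap,
          LinearMap.mulLeft_apply]
        rw [← mul_assoc, hFsucc (i+j)]
        exact le_sup_right (α := Submodule K E) <|
          Submodule.subset_span ⟨_, ih i u hu v hv, k, rfl⟩
    intro v hv
    exact this hv

theorem dk_mem (k : Fin s) : ((d k).toLinearMap) ∈ F 1 := by
  rw [hFsucc 0]
  apply le_sup_right (α := Submodule K E)
  apply Submodule.subset_span
  refine ⟨1, ?_, k, ?_⟩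
  · rw [← Lm_one (K := K) (A := A)]; exact lmul_mem d F hF0 hFsucc 1
  · rw [one_mul]


theorem Flow_le_sub : ∀ n, FlowF F n ≤ F (n - 1)
  | 0 => bot_le
  | (n+1) => le_rfl

theorem Flow_le : ∀ n, FlowF F n ≤ F n
  | 0 => bot_le
  | (n+1) => Fmono d F hF0 hFsucc (Nat.le_succ n)

theorem mulFlow_right : ∀ j i, ∀ u ∈ F i, ∀ v ∈ FlowF F j, u * v ∈ FlowF F (i + j) := by
  intro j
  cases j with
  | zero =>
    intro i u _ v hv
    rw [FlowF] at hv
    rw [Submodule.mem_bot] at hv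
    subst hv
    rw [mul_zero]
    exact zero_mem _
  | succ j =>
    intro i u hu v hv
    show u * v ∈ F (i + j)
    exact mul_mem_F d F hF0 hFsucc j i u hu v hv

theorem mulFlow_left : ∀ i j, ∀ u ∈ FlowF F i, ∀ v ∈ F j, u * v ∈ FlowF F (i + j) := by
  intro i
  cases i with
  | zero =>
    intro j u hu v hv
    rw [FlowF, Submodule.mem_bot] at hu
    subst hu
    rw [zero_mul]
    exact zero_mem _
  | succ i =>
    intro j u hu v hv
    have : i + 1 + j = (i + j) + 1 := by omega
    rw [this]
    show u * v ∈ F (i + j)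
    exact mul_mem_F d F hF0 hFsucc j i u hu v hv

include hbr

theorem C0f : ∀ j (a : A), ∀ v ∈ F j, Lm K A a * v - v * Lm K A a ∈ FlowF F j := by
  intro j
  induction j with
  | zero =>
    intro a v hv
    rw [hF0' d F hF0 hFsucc] at hv
    obtain ⟨b, rfl⟩ := hv
    show Lm K A a * Lm K A b - Lm K A b * Lm K A a ∈ _
    rw [← Lm_mul, ← Lm_mul, mul_comm a b, sub_self]
    exact zero_mem _
  | succ j ih =>
    intro a
    have : F (j+1) ≤ (F j).comap (LinearMap.mulLeft K (Lm K A a) - LinearMap.mulRight K (Lm K A a)) := by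
      rw [hFsucc j]
      apply sup_le
      · intro v hv
        simp only [Submodule.mem_comap, LinearMap.sub_apply, LinearMap.mulLeft_apply,
          LinearMap.mulRight_apply]
        exact Flow_le d F hF0 hFsucc j (ih a v hv)
      · rw [Submodule.span_le]
        rintro _ ⟨w, hw, k, rfl⟩
        simp only [Set.mem_setOf_eq, SetLike.mem_coe, Submodule.mem_comap, LinearMap.sub_apply,
          LinearMap.mulLeft_apply, LinearMap.mulRight_apply]
        have key : Lm K A a * (w * (d k).toLinearMap) - w * (d k).toLinearMap * Lm K A a
            = (Lm K A a * w - w * Lm K A a) * (d k).toLinearMap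
              - w * Lm K A ((d k) a) := by
          have h := dk_lmul d F hF0 hFsucc k a
          rw [mul_assoc w, h]
          simp only [mul_sub, sub_mul, mul_add, add_mul, mul_assoc, neg_mul, mul_neg]; abel
        rw [key]
        apply sub_mem
        · exact mulFlow_left d F hF0 hFsucc j 1 _ (ih a w hw) _ (dk_mem d F hF0 hFsucc k)
        · exact mulA_mem d F hF0 hFsucc j w hw _
    intro v hv
    exact this hv

theorem C1 : ∀ i, ∀ u ∈ F i, ∀ k : Fin s,
    u * (d k).toLinearMap - (d k).toLinearMap * u ∈ F i := by
  intro i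
  induction i with
  | zero =>
    intro u hu k
    rw [hF0' d F hF0 hFsucc] at hu
    obtain ⟨a, rfl⟩ := hu
    have : Lm K A a * (d k).toLinearMap - (d k).toLinearMap * Lm K A a
        = - Lm K A ((d k) a) := by
      rw [dk_lmul d F hF0 hFsucc]; noncomm_ring
    rw [this]
    exact neg_mem (lmul_mem d F hF0 hFsucc _)
  | succ i ih =>
    intro u hu k
    revert u hu
    have : F (i+1) ≤ (F (i+1)).comap
        (LinearMap.mulRight K ((d k).toLinearMap) - LinearMap.mulLeft K ((d k).toLinearMap)) := by
      rw [hFsucc i]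
      apply sup_le
      · intro v hv
        simp only [Submodule.mem_comap, LinearMap.sub_apply, LinearMap.mulLeft_apply,
          LinearMap.mulRight_apply]
        rw [← hFsucc i]
        exact Fmono d F hF0 hFsucc (Nat.le_succ i) (ih v hv k)
      · rw [Submodule.span_le]
        rintro _ ⟨w, hw, l, rfl⟩
        simp only [Set.mem_setOf_eq, SetLike.mem_coe, Submodule.mem_comap, LinearMap.sub_apply,
          LinearMap.mulLeft_apply, LinearMap.mulRight_apply]
        have key : w * (d l).toLinearMap * (d k).toLinearMap
              - (d k).toLinearMap * (w * (d l).toLinearMap)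
            = w * ((d l).toLinearMap * (d k).toLinearMap
                - (d k).toLinearMap * (d l).toLinearMap)
              + (w * (d k).toLinearMap - (d k).toLinearMap * w) * (d l).toLinearMap := by
          simp only [mul_sub, sub_mul, mul_add, add_mul, mul_assoc, neg_mul, mul_neg]; abel
        rw [key]
        apply add_mem
        · rw [← hFsucc i]
          exact mul_mem_F d F hF0 hFsucc 1 i w hw _ (hbr l k)
        · exact le_sup_right (α := Submodule K E) <|
            Submodule.subset_span ⟨_, ih w hw k, l, rfl⟩
    intro u hu
    exact this hu

theorem Cf : ∀ j i, ∀ u ∈ F i, ∀ v ∈ F j, u * v - v * u ∈ FlowF F (i + j) := by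
  intro j
  induction j with
  | zero =>
    intro i u hu v hv
    rw [hF0' d F hF0 hFsucc] at hv
    obtain ⟨a, rfl⟩ := hv
    have : u * Lm K A a - Lm K A a * u = -(Lm K A a * u - u * Lm K A a) := by noncomm_ring
    rw [this]
    exact neg_mem (C0f d F hF0 hFsucc hbr i a u hu)
  | succ j ih =>
    intro i u hu
    have : F (j+1) ≤ (F (i + j)).comap
        (LinearMap.mulLeft K u - LinearMap.mulRight K u) := by
      rw [hFsucc j]
      apply sup_le
      · intro v hv
        simp only [Submodule.mem_comap, LinearMap.sub_apply, LinearMap.mulLeft_apply,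
          LinearMap.mulRight_apply]
        exact Flow_le d F hF0 hFsucc _ (ih i u hu v hv)
      · rw [Submodule.span_le]
        rintro _ ⟨w, hw, k, rfl⟩
        simp only [Set.mem_setOf_eq, SetLike.mem_coe, Submodule.mem_comap, LinearMap.sub_apply,
          LinearMap.mulLeft_apply, LinearMap.mulRight_apply]
        have key : u * (w * (d k).toLinearMap) - w * (d k).toLinearMap * u
            = (u * w - w * u) * (d k).toLinearMap
              + w * (u * (d k).toLinearMap - (d k).toLinearMap * u) := by
          simp only [mul_sub, sub_mul, mul_add, add_mul, mul_assoc, neg_mul, mul_neg]; abel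
        rw [key]
        apply add_mem
        · have h1 := mulFlow_left d F hF0 hFsucc (i+j) 1 _ (ih i u hu w hw) _
            (dk_mem d F hF0 hFsucc k)
          exact h1
        · have h2 := mul_mem_F d F hF0 hFsucc i j w hw _ (C1 d F hF0 hFsucc hbr i u hu k)
          have : j + i = i + j := Nat.add_comm j i
          rw [this] at h2
          exact h2
    intro v hv
    have h := this hv
    simp only [Submodule.mem_comap, LinearMap.sub_apply, LinearMap.mulLeft_apply,
      LinearMap.mulRight_apply] at h
    show u * v - v * u ∈ FlowF F (i + j + 1)
    exact h


end

section Mon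

/-- product of derivations indexed by a list -/
noncomputable def prodD (l : List (Fin s)) : Module.End K A :=
  (l.map fun k => (d k).toLinearMap).prod

@[simp] lemma prodD_nil : prodD d ([] : List (Fin s)) = 1 := by
  simp [prodD]

@[simp] lemma prodD_cons (k : Fin s) (l : List (Fin s)) :
    prodD d (k :: l) = (d k).toLinearMap * prodD d l := by
  simp [prodD]

lemma prodD_append (l l' : List (Fin s)) :
    prodD d (l ++ l') = prodD d l * prodD d l' := by
  simp [prodD]

include hF0 hFsucc in
theorem prodD_mem : ∀ l : List (Fin s), prodD d l ∈ F l.length := by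
  intro l
  induction l with
  | nil =>
    rw [prodD_nil, ← Lm_one (K := K) (A := A)]
    exact lmul_mem d F hF0 hFsucc 1
  | cons k l ih =>
    rw [prodD_cons, List.length_cons, Nat.add_comm]
    exact mul_mem_F d F hF0 hFsucc l.length 1 _ (dk_mem d F hF0 hFsucc k) _ ih

include hF0 hFsucc hbr in
theorem prodD_perm {l l' : List (Fin s)} (h : l.Perm l') :
    prodD d l - prodD d l' ∈ FlowF F l.length := by
  induction h with
  | nil => simpa using zero_mem _
  | @cons x l₁ l₂ h ih =>
    have : prodD d (x :: l₁) - prodD d (x :: l₂)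
        = (d x).toLinearMap * (prodD d l₁ - prodD d l₂) := by
      rw [prodD_cons, prodD_cons, mul_sub]
    rw [this, List.length_cons, Nat.add_comm]
    exact mulFlow_right d F hF0 hFsucc _ 1 _ (dk_mem d F hF0 hFsucc x) _ ih
  | swap x y l =>
    have : prodD d (y :: x :: l) - prodD d (x :: y :: l)
        = ((d y).toLinearMap * (d x).toLinearMap
            - (d x).toLinearMap * (d y).toLinearMap) * prodD d l := by
      simp only [prodD_cons]
      rw [sub_mul, mul_assoc, mul_assoc]
    rw [this]
    show _ ∈ FlowF F (l.length + 1 + 1)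
    have h2 := mul_mem_F d F hF0 hFsucc l.length 1 _ (hbr y x) _
      (prodD_mem d F hF0 hFsucc l)
    show _ ∈ F (l.length + 1)
    rw [Nat.add_comm] at h2
    exact h2
  | @trans l₁ l₂ l₃ h12 h23 ih1 ih2 =>
    have : prodD d l₁ - prodD d l₃ = (prodD d l₁ - prodD d l₂) + (prodD d l₂ - prodD d l₃) := by
      abel
    rw [this]
    apply add_mem ih1
    rw [List.Perm.length_eq h12]
    exact ih2

/-- canonical list of indices attached to an exponent vector -/
def listOf (α : Fin s →₀ ℕ) : List (Fin s) :=
  (List.finRange s).flatMap fun j => List.replicate (α j) j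

lemma count_listOf (α : Fin s →₀ ℕ) (j : Fin s) : (listOf α).count j = α j := by
  have key : ∀ L : List (Fin s),
      (L.flatMap fun i => List.replicate (α i) i).count j = α j * L.count j := by
    intro L
    induction L with
    | nil => simp
    | cons i L ih =>
      rw [List.flatMap_cons, List.count_append, ih, List.count_cons, List.count_replicate]
      by_cases h : i = j
      · subst h; simp [Nat.mul_add]; ring
      · simp [h]
  rw [listOf, key]
  have : (List.finRange s).count j = 1 := by
    rw [List.count_eq_one_of_mem (List.nodup_finRange s) (List.mem_finRange j)]
  rw [this, Nat.mul_one]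

lemma length_listOf (α : Fin s →₀ ℕ) : (listOf α).length = α.degree := by
  rw [listOf, List.length_flatMap]
  have h1 : (List.map (List.length ∘ fun j => List.replicate (α j) j) (List.finRange s)).sum
      = ∑ k : Fin s, α k := by
    rw [Fin.sum_univ_def]
    congr 1
    apply List.map_congr_left
    intro k _
    simp
  refine Eq.trans h1 ?_
  rw [Finsupp.degree_apply]
  exact (Finset.sum_subset (Finset.subset_univ _)
    (fun x _ hx => Finsupp.notMem_support_iff.mp hx)).symm

lemma degree_add (α β : Fin s →₀ ℕ) : (α + β).degree = α.degree + β.degree := by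
  simp [Finsupp.degree_eq_weight_one, map_add]

lemma perm_listOf_add (α β : Fin s →₀ ℕ) :
    (listOf (α + β)).Perm (listOf α ++ listOf β) := by
  rw [List.perm_iff_count]
  intro j
  rw [List.count_append, count_listOf, count_listOf, count_listOf, Finsupp.add_apply]

/-- the canonical monomial in the derivations -/
noncomputable def dmon (α : Fin s →₀ ℕ) : Module.End K A := prodD d (listOf α)

include hF0 hFsucc in
theorem dmon_mem (α : Fin s →₀ ℕ) : dmon d α ∈ F α.degree := by
  rw [← length_listOf]
  exact prodD_mem d F hF0 hFsucc _

include hF0 hFsucc hbr in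
theorem dmon_mul (α β : Fin s →₀ ℕ) :
    dmon d α * dmon d β - dmon d (α + β) ∈ FlowF F (α.degree + β.degree) := by
  have h := prodD_perm d F hF0 hFsucc hbr (perm_listOf_add α β)
  rw [length_listOf, degree_add] at h
  rw [prodD_append] at h
  have : dmon d α * dmon d β - dmon d (α + β)
      = -(prodD d (listOf (α + β)) - prodD d (listOf α) * prodD d (listOf β)) := by
    rw [dmon, dmon, dmon]; abel
  rw [this]
  exact neg_mem h


/-- evaluation of a polynomial as a differential operator, using canonical monomials -/
noncomputable def evP (p : MvPolynomial (Fin s) A) : Module.End K A :=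
  ∑ α ∈ p.support, Lm K A (MvPolynomial.coeff α p) * dmon d α

lemma evP_subset (p : MvPolynomial (Fin s) A) (t : Finset (Fin s →₀ ℕ)) (h : p.support ⊆ t) :
    evP d p = ∑ α ∈ t, Lm K A (MvPolynomial.coeff α p) * dmon d α := by
  refine Finset.sum_subset h (fun x _ hx => ?_)
  rw [MvPolynomial.notMem_support_iff.mp hx]
  simp

@[simp] lemma evP_zero : evP d (0 : MvPolynomial (Fin s) A) = 0 := by
  simp [evP]

lemma evP_add (p q : MvPolynomial (Fin s) A) : evP d (p + q) = evP d p + evP d q := by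
  classical
  rw [evP_subset d (p + q) (p.support ∪ q.support) MvPolynomial.support_add,
    evP_subset d p (p.support ∪ q.support) Finset.subset_union_left,
    evP_subset d q (p.support ∪ q.support) Finset.subset_union_right,
    ← Finset.sum_add_distrib]
  apply Finset.sum_congr rfl
  intro α _
  rw [MvPolynomial.coeff_add, map_add, add_mul]

lemma evP_smul (c : K) (p : MvPolynomial (Fin s) A) : evP d (c • p) = c • evP d p := by
  classical
  rw [evP_subset d (c • p) p.support MvPolynomial.support_smul, evP, Finset.smul_sum]
  apply Finset.sum_congr rfl
  intro α _
  rw [MvPolynomial.coeff_smul, map_smul, smul_mul_assoc]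

lemma evP_sum {ι : Type*} (t : Finset ι) (f : ι → MvPolynomial (Fin s) A) :
    evP d (∑ x ∈ t, f x) = ∑ x ∈ t, evP d (f x) := by
  classical
  induction t using Finset.induction_on with
  | empty => simp
  | insert a t' hx ih =>
                    rw [Finset.sum_insert hx, Finset.sum_insert hx, evP_add, ih]

lemma evP_monomial (α : Fin s →₀ ℕ) (a : A) :
    evP d (MvPolynomial.monomial α a) = Lm K A a * dmon d α := by
  classical
  by_cases h : a = 0
  · subst h; simp
  · rw [evP, MvPolynomial.support_monomial, if_neg h, Finset.sum_singleton,
      MvPolynomial.coeff_monomial, if_pos rfl]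

lemma deg_of_mem_support {p : MvPolynomial (Fin s) A} {n : ℕ}
    (hp : p.IsHomogeneous n) {α : Fin s →₀ ℕ} (hα : α ∈ p.support) : α.degree = n := by
  rw [Finsupp.degree_eq_weight_one]
  exact hp (MvPolynomial.mem_support_iff.mp hα)

include hF0 hFsucc in
theorem evP_mem {p : MvPolynomial (Fin s) A} {n : ℕ} (hp : p.IsHomogeneous n) :
    evP d p ∈ F n := by
  apply Submodule.sum_mem
  intro α hα
  have h1 := mul_mem_F d F hF0 hFsucc α.degree 0 (Lm K A (MvPolynomial.coeff α p))
    (lmul_mem d F hF0 hFsucc _) _ (dmon_mem d F hF0 hFsucc α)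
  rw [Nat.zero_add, deg_of_mem_support hp hα] at h1
  exact h1

include hF0 hFsucc hbr in
theorem evP_mul_flow {p q : MvPolynomial (Fin s) A} {i j : ℕ}
    (hp : p.IsHomogeneous i) (hq : q.IsHomogeneous j) :
    evP d (q * p) - evP d q * evP d p ∈ FlowF F (j + i) := by
  classical
  -- expand q * p into monomials
  have hq' := MvPolynomial.as_sum q
  have hp' := MvPolynomial.as_sum p
  have expand : q * p = ∑ β ∈ q.support, ∑ α ∈ p.support,
      MvPolynomial.monomial (β + α) (MvPolynomial.coeff β q * MvPolynomial.coeff α p) := by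
    conv_lhs => rw [hq', hp']
    rw [Finset.sum_mul_sum]
    apply Finset.sum_congr rfl; intro β _
    apply Finset.sum_congr rfl; intro α _
    rw [MvPolynomial.monomial_mul]
  rw [expand, evP_sum]
  have evqp : evP d q * evP d p = ∑ β ∈ q.support, ∑ α ∈ p.support,
      (Lm K A (MvPolynomial.coeff β q) * dmon d β)
        * (Lm K A (MvPolynomial.coeff α p) * dmon d α) := by
    rw [evP, evP, Finset.sum_mul_sum]
  rw [evqp]
  have : ∀ β ∈ q.support, evP d (∑ α ∈ p.support,
        MvPolynomial.monomial (β + α) (MvPolynomial.coeff β q * MvPolynomial.coeff α p))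
      = ∑ α ∈ p.support, Lm K A (MvPolynomial.coeff β q * MvPolynomial.coeff α p)
          * dmon d (β + α) := by
    intro β _
    rw [evP_sum]
    apply Finset.sum_congr rfl
    intro α _
    rw [evP_monomial]
  rw [Finset.sum_congr rfl this, ← Finset.sum_sub_distrib]
  apply Submodule.sum_mem
  intro β hβ
  rw [← Finset.sum_sub_distrib]
  apply Submodule.sum_mem
  intro α hα
  set b := MvPolynomial.coeff β q
  set a := MvPolynomial.coeff α p
  have hdb : β.degree = j := deg_of_mem_support hq hβ
  have hda : α.degree = i := deg_of_mem_support hp hα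
  -- the commutator of dmon β with Lm a
  have hc : dmon d β * Lm K A a - Lm K A a * dmon d β ∈ FlowF F j := by
    have := Cf d F hF0 hFsucc hbr 0 β.degree _ (dmon_mem d F hF0 hFsucc β) _
      (lmul_mem d F hF0 hFsucc a)
    rw [Nat.add_zero, hdb] at this
    exact this
  have hm : dmon d β * dmon d α - dmon d (β + α) ∈ FlowF F (j + i) := by
    have := dmon_mul d F hF0 hFsucc hbr β α
    rw [hdb, hda] at this
    exact this
  have key : Lm K A (b * a) * dmon d (β + α)
        - (Lm K A b * dmon d β) * (Lm K A a * dmon d α)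
      = (- (Lm K A (b * a) * (dmon d β * dmon d α - dmon d (β + α))))
        - Lm K A b * (dmon d β * Lm K A a - Lm K A a * dmon d β) * dmon d α := by
    rw [Lm_mul]
    simp only [mul_sub, sub_mul, mul_add, add_mul, mul_assoc, neg_mul, mul_neg]; abel
  rw [key]
  apply sub_mem
  · apply neg_mem
    have h1 := mulFlow_right d F hF0 hFsucc (j + i) 0 _
      (lmul_mem d F hF0 hFsucc (b * a)) _ hm
    rw [Nat.zero_add] at h1
    exact h1
  · have h1 := mulFlow_right d F hF0 hFsucc j 0 _ (lmul_mem d F hF0 hFsucc b) _ hc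
    rw [Nat.zero_add] at h1
    have h2 := mulFlow_left d F hF0 hFsucc j α.degree _ h1 _ (dmon_mem d F hF0 hFsucc α)
    rw [hda] at h2
    exact h2


lemma listOf_zero : listOf (0 : Fin s →₀ ℕ) = [] := by
  apply List.eq_nil_of_length_eq_zero
  rw [length_listOf]
  simp [Finsupp.degree]

@[simp] lemma dmon_zero : dmon d (0 : Fin s →₀ ℕ) = 1 := by
  rw [dmon, listOf_zero, prodD_nil]

lemma evP_C (a : A) : evP d (MvPolynomial.C a) = Lm K A a := by
  rw [show (MvPolynomial.C a : MvPolynomial (Fin s) A) = MvPolynomial.monomial 0 a from rfl,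
    evP_monomial, dmon_zero, mul_one]

include hF0 hFsucc hbr in
lemma evP_X_sub (k : Fin s) :
    evP d (MvPolynomial.X k : MvPolynomial (Fin s) A) - (d k).toLinearMap ∈ F 0 := by
  classical
  have hX : (MvPolynomial.X k : MvPolynomial (Fin s) A)
      = MvPolynomial.monomial (Finsupp.single k 1) 1 := rfl
  rw [hX, evP_monomial, Lm_one, one_mul]
  have hperm : (listOf (Finsupp.single k 1)).Perm [k] := by
    rw [List.perm_iff_count]
    intro j
    rw [count_listOf]
    by_cases h : k = j
    · subst h; simp
    · rw [Finsupp.single_apply, if_neg h]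
      simp [List.count_cons, Ne.symm h, h]
  have h1 := prodD_perm d F hF0 hFsucc hbr hperm
  rw [length_listOf] at h1
  have hdeg : (Finsupp.single k 1 : Fin s →₀ ℕ).degree = 1 := by
    rw [Finsupp.degree_apply, Finsupp.support_single_ne_zero k one_ne_zero]
    simp
  rw [hdeg] at h1
  have h2 : prodD d [k] = (d k).toLinearMap := by
    rw [show ([k] : List (Fin s)) = k :: [] from rfl, prodD_cons, prodD_nil, mul_one]
  rw [dmon, ← h2]
  exact h1

include hF0 hFsucc hbr in
theorem spanF : ∀ i, ∀ x ∈ F i, ∃ p : MvPolynomial (Fin s) A,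
    p.IsHomogeneous i ∧ x - evP d p ∈ FlowF F i := by
  intro i
  induction i with
  | zero =>
    intro x hx
    rw [hF0' d F hF0 hFsucc] at hx
    obtain ⟨a, rfl⟩ := hx
    refine ⟨MvPolynomial.C a, MvPolynomial.isHomogeneous_C _ _, ?_⟩
    rw [evP_C, sub_self]
    exact zero_mem _
  | succ i ih =>
    intro x hx
    rw [hFsucc i] at hx
    obtain ⟨y, hy, z, hz, rfl⟩ := Submodule.mem_sup.mp hx
    -- handle z by span induction
    clear hx
    have hzz : ∃ p : MvPolynomial (Fin s) A,
        p.IsHomogeneous (i+1) ∧ z - evP d p ∈ F i := by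
      induction hz using Submodule.span_induction with
      | mem w hw =>
        obtain ⟨u, hu, k, rfl⟩ := hw
        obtain ⟨p, hp, hup⟩ := ih u hu
        refine ⟨p * MvPolynomial.X k, hp.mul (MvPolynomial.isHomogeneous_X _ _), ?_⟩
        have key : u * (d k).toLinearMap - evP d (p * MvPolynomial.X k)
            = ((u - evP d p) * (d k).toLinearMap
              - evP d p * (evP d (MvPolynomial.X k) - (d k).toLinearMap))
              - (evP d (p * MvPolynomial.X k)
                  - evP d p * evP d (MvPolynomial.X k)) := by
          simp only [mul_sub, sub_mul, mul_add, add_mul, mul_assoc, neg_mul, mul_neg]; abel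
        rw [key]
        apply sub_mem
        apply sub_mem
        · have h1 := mulFlow_left d F hF0 hFsucc i 1 _ hup _ (dk_mem d F hF0 hFsucc k)
          exact h1
        · have h1 := mul_mem_F d F hF0 hFsucc 0 i _ (evP_mem d F hF0 hFsucc hp) _
            (evP_X_sub d F hF0 hFsucc hbr k)
          rw [Nat.add_zero] at h1
          exact h1
        · have h1 := evP_mul_flow d F hF0 hFsucc hbr
            (MvPolynomial.isHomogeneous_X _ k) hp
          exact h1
      | zero =>
        exact ⟨0, MvPolynomial.isHomogeneous_zero _ _ _, by simpa using zero_mem _⟩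
      | add z₁ z₂ _ _ h₁ h₂ =>
        obtain ⟨p₁, hp₁, he₁⟩ := h₁
        obtain ⟨p₂, hp₂, he₂⟩ := h₂
        refine ⟨p₁ + p₂, hp₁.add hp₂, ?_⟩
        rw [evP_add]
        have : z₁ + z₂ - (evP d p₁ + evP d p₂) = (z₁ - evP d p₁) + (z₂ - evP d p₂) := by
          abel
        rw [this]
        exact add_mem he₁ he₂
      | smul c z₁ _ h₁ =>
        obtain ⟨p₁, hp₁, he₁⟩ := h₁
        have hsm : (c • p₁).IsHomogeneous (i+1) := by
          intro δ hδ
          apply hp₁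
          intro h
          exact hδ (by rw [MvPolynomial.coeff_smul, h, smul_zero])
        refine ⟨c • p₁, hsm, ?_⟩
        rw [evP_smul, ← smul_sub]
        exact Submodule.smul_mem _ c he₁
    obtain ⟨p, hp, he⟩ := hzz
    refine ⟨p, hp, ?_⟩
    have : y + z - evP d p = y + (z - evP d p) := by abel
    rw [this]
    show _ ∈ F i
    exact add_mem hy he


/-- the algebra of differential operators -/
noncomputable def DAlg : Subalgebra K (Module.End K A) :=
  Algebra.adjoin K
    (Set.range ⇑(Algebra.lmul K A) ∪ Set.range (fun k : Fin s => (d k).toLinearMap))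

lemma Lm_mem_D (a : A) : Lm K A a ∈ DAlg d := by
  apply Algebra.subset_adjoin
  exact Set.mem_union_left _ ⟨a, rfl⟩

lemma dk_mem_D (k : Fin s) : (d k).toLinearMap ∈ DAlg d := by
  apply Algebra.subset_adjoin
  exact Set.mem_union_right _ ⟨k, rfl⟩

lemma prodD_mem_D (l : List (Fin s)) : prodD d l ∈ DAlg d := by
  induction l with
  | nil => rw [prodD_nil]; exact one_mem _
  | cons k l ih => rw [prodD_cons]; exact mul_mem (dk_mem_D d k) ih

lemma evP_mem_D (p : MvPolynomial (Fin s) A) : evP d p ∈ DAlg d := by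
  apply Subalgebra.sum_mem
  intro α _
  exact mul_mem (Lm_mem_D d _) (prodD_mem_D d _)

include hF0 hFsucc in
theorem F_le_D : ∀ i, F i ≤ Subalgebra.toSubmodule (DAlg d) := by
  intro i
  induction i with
  | zero =>
    rw [hF0' d F hF0 hFsucc]
    rintro x ⟨a, rfl⟩
    exact Lm_mem_D d a
  | succ i ih =>
    rw [hFsucc i]
    apply sup_le ih
    rw [Submodule.span_le]
    rintro _ ⟨u, hu, k, rfl⟩
    have h1 : u ∈ DAlg d := ih hu
    show u * (d k).toLinearMap ∈ Subalgebra.toSubmodule (DAlg d)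
    rw [Subalgebra.mem_toSubmodule]
    exact mul_mem h1 (dk_mem_D d k)

include hF0 hFsucc in
theorem D_exhaust : ∀ x ∈ DAlg d, ∃ i, x ∈ F i := by
  have hT : DAlg d ≤
      { carrier := {x : Module.End K A | ∃ i, x ∈ F i}
        mul_mem' := by
          rintro x y ⟨i, hi⟩ ⟨j, hj⟩
          exact ⟨i + j, mul_mem_F d F hF0 hFsucc j i x hi y hj⟩
        one_mem' := ⟨0, by
          rw [← Lm_one (K := K) (A := A)]; exact lmul_mem d F hF0 hFsucc 1⟩
        add_mem' := by
          rintro x y ⟨i, hi⟩ ⟨j, hj⟩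
          exact ⟨max i j, add_mem (Fmono d F hF0 hFsucc (le_max_left i j) hi)
            (Fmono d F hF0 hFsucc (le_max_right i j) hj)⟩
        zero_mem' := ⟨0, zero_mem _⟩
        algebraMap_mem' := by
          intro c
          refine ⟨0, ?_⟩
          have : algebraMap K (Module.End K A) c = Lm K A (algebraMap K A c) := by
            ext x
            simp [Module.algebraMap_end_apply, Algebra.smul_def]
          rw [this]
          exact lmul_mem d F hF0 hFsucc _ } := by
    apply Algebra.adjoin_le
    rintro x (⟨a, rfl⟩ | ⟨k, rfl⟩)
    · exact ⟨0, lmul_mem d F hF0 hFsucc a⟩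
    · exact ⟨1, dk_mem d F hF0 hFsucc k⟩
  exact fun x hx => hT hx

open MvPolynomial in
lemma hc_mul_right {q p : MvPolynomial (Fin s) A} {n : ℕ} (hp : p.IsHomogeneous n) (m : ℕ) :
    homogeneousComponent m (q * p)
      = if n ≤ m then homogeneousComponent (m - n) q * p else 0 := by
  classical
  conv_lhs => rw [← sum_homogeneousComponent q]
  rw [Finset.sum_mul, map_sum]
  have hterm : ∀ j, homogeneousComponent m (homogeneousComponent j q * p)
      = if m = j + n then homogeneousComponent j q * p else 0 := fun j =>
    homogeneousComponent_of_mem ((homogeneousComponent_isHomogeneous j q).mul hp)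
  rw [Finset.sum_congr rfl (fun j _ => hterm j)]
  by_cases h : n ≤ m
  · rw [if_pos h]
    have hiff : ∀ j ∈ Finset.range (q.totalDegree + 1),
        (if m = j + n then homogeneousComponent j q * p else 0)
          = if j = m - n then homogeneousComponent j q * p else 0 := by
      intro j _
      exact if_congr (by omega) rfl rfl
    rw [Finset.sum_congr rfl hiff, Finset.sum_ite_eq' (Finset.range _) (m - n)]
    split_ifs with hmem
    · rfl
    · rw [Finset.mem_range, not_lt] at hmem
      rw [homogeneousComponent_eq_zero _ q (by omega), zero_mul]
  · rw [if_neg h]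
    apply Finset.sum_eq_zero
    intro j _
    rw [if_neg (by omega)]


open MvPolynomial in
/-- the symbol ideal of a left ideal of the ring of differential operators -/
noncomputable def Sig (I : Submodule ↥(DAlg d) ↥(DAlg d)) : Ideal (MvPolynomial (Fin s) A) :=
  Ideal.span {p | ∃ n : ℕ, p.IsHomogeneous n ∧ ∃ y : ↥(DAlg d), y ∈ I ∧
    ((y : Module.End K A) ∈ F n) ∧ evP d p - (y : Module.End K A) ∈ FlowF F n}

theorem Sig_mono {I J : Submodule ↥(DAlg d) ↥(DAlg d)} (h : I ≤ J) :
    Sig d F I ≤ Sig d F J := by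
  apply Ideal.span_mono
  rintro p ⟨n, hp, y, hyI, hyF, hyfl⟩
  exact ⟨n, hp, y, h hyI, hyF, hyfl⟩

open MvPolynomial in
include hF0 hFsucc hbr in
theorem Sig_extract {I : Submodule ↥(DAlg d) ↥(DAlg d)} {r : MvPolynomial (Fin s) A}
    (hr : r ∈ Sig d F I) (m : ℕ) :
    ∃ y : ↥(DAlg d), y ∈ I ∧ ((y : Module.End K A) ∈ F m) ∧
      evP d (homogeneousComponent m r) - (y : Module.End K A) ∈ FlowF F m := by
  classical
  rw [Sig, Ideal.span, Submodule.mem_span_set] at hr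
  obtain ⟨c, hcs, rfl⟩ := hr
  have hdecomp : homogeneousComponent m (c.sum fun g a => a • g)
      = ∑ g ∈ c.support.attach, homogeneousComponent m (c g.1 * g.1) := by
    calc homogeneousComponent m (c.sum fun g a => a • g)
        = ∑ g ∈ c.support, homogeneousComponent m (c g * g) := by
          rw [Finsupp.sum, map_sum]
          apply Finset.sum_congr rfl
          intro g _
          rw [smul_eq_mul]
      _ = ∑ g ∈ c.support.attach, homogeneousComponent m (c g.1 * g.1) :=
          (Finset.sum_attach _ _).symm
  have hg : ∀ g : {x // x ∈ c.support}, ∃ y : ↥(DAlg d), y ∈ I ∧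
      ((y : Module.End K A) ∈ F m) ∧
      evP d (homogeneousComponent m (c g.1 * g.1)) - (y : Module.End K A) ∈ FlowF F m := by
    intro g
    obtain ⟨n, hhom, y, hyI, hyF, hyfl⟩ := hcs g.2
    rw [hc_mul_right hhom m]
    by_cases h : n ≤ m
    · rw [if_pos h]
      set q := homogeneousComponent (m - n) (c g.1) with hqdef
      have hq : q.IsHomogeneous (m - n) := homogeneousComponent_isHomogeneous _ _
      refine ⟨(⟨evP d q, evP_mem_D d q⟩ : ↥(DAlg d)) * y, I.smul_mem _ hyI, ?_, ?_⟩
      · have h1 := mul_mem_F d F hF0 hFsucc n (m - n) _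
          (evP_mem d F hF0 hFsucc hq) _ hyF
        rw [Nat.sub_add_cancel h] at h1
        simpa using h1
      · have h1 := evP_mul_flow d F hF0 hFsucc hbr hhom hq
        have h2 := mulFlow_right d F hF0 hFsucc n (m - n) _
          (evP_mem d F hF0 hFsucc hq) _ hyfl
        rw [Nat.sub_add_cancel h] at h1 h2
        have key : evP d (q * g.1) - ((((⟨evP d q, evP_mem_D d q⟩ : ↥(DAlg d)) * y :
              ↥(DAlg d)) : Module.End K A))
            = (evP d (q * g.1) - evP d q * evP d g.1)
              + evP d q * (evP d g.1 - (y : Module.End K A)) := by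
          push_cast
          simp only [mul_sub, sub_mul, mul_add, add_mul, mul_assoc, neg_mul, mul_neg]; abel
        rw [key]
        exact add_mem h1 h2
    · rw [if_neg h]
      exact ⟨0, zero_mem I, by simp, by simpa using zero_mem _⟩
  choose Y hY1 hY2 hY3 using hg
  refine ⟨∑ g ∈ c.support.attach, Y g, Submodule.sum_mem I (fun g _ => hY1 g), ?_, ?_⟩
  · rw [AddSubmonoidClass.coe_finset_sum]
    exact Submodule.sum_mem _ (fun g _ => hY2 g)
  · rw [hdecomp, evP_sum, AddSubmonoidClass.coe_finset_sum, ← Finset.sum_sub_distrib]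
    exact Submodule.sum_mem _ (fun g _ => hY3 g)

open MvPolynomial in
include hF0 hFsucc hbr in
theorem Sig_key {I J : Submodule ↥(DAlg d) ↥(DAlg d)} (hIJ : I ≤ J)
    (hS : Sig d F J ≤ Sig d F I) : J ≤ I := by
  have H : ∀ n, ∀ z : ↥(DAlg d), z ∈ J → ((z : Module.End K A) ∈ F n) → z ∈ I := by
    intro n
    induction n using Nat.strong_induction_on with
    | _ n ih =>
      intro z hzJ hzF
      obtain ⟨p, hp, hxp⟩ := spanF d F hF0 hFsucc hbr n _ hzF
      have hpJ : p ∈ Sig d F J := Ideal.subset_span ⟨n, hp, z, hzJ, hzF, by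
        have heq : evP d p - (z : Module.End K A) = -((z : Module.End K A) - evP d p) := by
          abel
        rw [heq]
        exact neg_mem hxp⟩
      obtain ⟨y, hyI, hyF, hyfl⟩ := Sig_extract d F hF0 hFsucc hbr (hS hpJ) n
      rw [homogeneousComponent_of_mem hp, if_pos rfl] at hyfl
      have hzy : ((z - y : ↥(DAlg d)) : Module.End K A) ∈ FlowF F n := by
        have heq : ((z - y : ↥(DAlg d)) : Module.End K A)
            = ((z : Module.End K A) - evP d p) + (evP d p - (y : Module.End K A)) := by
          push_cast
          abel
        rw [heq]
        exact add_mem hxp hyfl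
      cases n with
      | zero =>
        have h0 : ((z - y : ↥(DAlg d)) : Module.End K A) = 0 := by
          simpa [FlowF] using hzy
        have h1 : z - y = 0 := by
          exact_mod_cast h0
        have h2 : z = y := by exact sub_eq_zero.mp h1
        rw [h2]
        exact hyI
      | succ n' =>
        have h1 : z - y ∈ J := by
          have e : z - y = z + (-1 : ↥(DAlg d)) • y := Subtype.ext (by push_cast; simp [sub_eq_add_neg]; exact (neg_one_mul (y : Module.End K A)).symm)
          rw [e]
          exact J.add_mem hzJ (J.smul_mem _ (hIJ hyI))
        have h2 := ih n' (Nat.lt_succ_self n') (z - y) h1 hzy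
        have h3 : z = (z - y) + y := by abel
        rw [h3]
        exact add_mem h2 hyI
  intro z hz
  obtain ⟨i, hi⟩ := D_exhaust d F hF0 hFsucc (z : Module.End K A) z.2
  exact H i z hz hi

end Mon

end Aux



/-- Let `𝔇(A)` be the subalgebra of `End_K(A)` generated by the multiplication operators and
finitely many derivations `d₁,…,d_s` (whose pairwise brackets lie back in filtration
degree `≤ 1`, as `[∂ᵢ,a] = ∂ᵢ(a) ∈ A` and `[der,der] ⊆ A·der` do in the paper's setting),
filtered by `F i` = total degree `≤ i` in the derivations. Then the associated graded
algebra is commutative: `[F i, F j] ⊆ F (i+j-1)`; consequently, if `A` is Noetherian then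
`𝔇(A)` is a (left and right) Noetherian ring. -/
theorem stmt_18 {K A : Type*} [Field K] [CommRing A] [Algebra K A] [IsNoetherianRing A]
    {s : ℕ} (d : Fin s → Derivation K A A)
    (F : ℕ → Submodule K (Module.End K A))
    (hF0 : F 0 = LinearMap.range (Algebra.lmul K A).toLinearMap)
    (hFsucc : ∀ i : ℕ, F (i + 1) = F i ⊔ Submodule.span K
      {w : Module.End K A | ∃ u ∈ F i, ∃ k : Fin s, w = u * (d k).toLinearMap})
    (hbr : ∀ k l : Fin s,
      (d k).toLinearMap * (d l).toLinearMap - (d l).toLinearMap * (d k).toLinearMap ∈ F 1) :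
    (∀ (i j : ℕ), ∀ u ∈ F i, ∀ v ∈ F j, u * v - v * u ∈ F (i + j - 1)) ∧
    IsNoetherianRing (Algebra.adjoin K
      (Set.range ⇑(Algebra.lmul K A) ∪
        Set.range (fun k : Fin s => (d k).toLinearMap))) := by
  constructor
  · intro i j u hu v hv
    exact Flow_le_sub d F hF0 hFsucc (i + j) (Cf d F hF0 hFsucc hbr j i u hu v hv)
  · show IsNoetherianRing ↥(DAlg d)
    rw [isNoetherianRing_iff, ← monotone_stabilizes_iff_noetherian]
    intro f
    have hP : IsNoetherian (MvPolynomial (Fin s) A) (MvPolynomial (Fin s) A) :=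
      isNoetherianRing_iff.mp inferInstance
    obtain ⟨n, hn⟩ := monotone_stabilizes_iff_noetherian.mpr hP
      ⟨fun n => Sig d F (f n), fun a b h => Sig_mono d F (f.mono h)⟩
    refine ⟨n, fun m hm => ?_⟩
    have h1 : f n ≤ f m := f.mono hm
    have h2 : Sig d F (f m) ≤ Sig d F (f n) := (hn m hm).ge
    exact le_antisymm h1 (Sig_key d F hF0 hFsucc hbr h1 h2)
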